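/- Suppose B is a topological coding of A with encoding words u_i, u_f and letter encoding λ. Then for every word u over the alphabet of A, u is accepted by A if and only if the word u_i · λ(u) · u_f is accepted by B, where λ is extended to words by concatenation. -/

import Mathlib

structure Auto (σ Q : Type) where
  Δ : Set (Q × σ × Q)
  I : Set Q
  F : Set Q

/-- A computation recorded as a starting state and a list of `(letter, next state)` steps. -/
abbrev Steps (σ Q : Type) := List (σ × Q)

inductive Auto.IsCompS {σ Q : Type} (A : Auto σ Q) : Q → Steps σ Q → Q → Prop
  | nil (q : Q) : A.IsCompS q [] q
  | cons {q q' t : Q} {a : σ} {l : Steps σ Q} :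
      (q, a, q') ∈ A.Δ → A.IsCompS q' l t → A.IsCompS q ((a, q') :: l) t

/-- Target of a computation. -/
def compTgt {σ Q : Type} (q : Q) (l : Steps σ Q) : Q := l.foldl (fun _ s => s.2) q

/-- Label of a computation. -/
def stepLabel {σ Q : Type} (l : Steps σ Q) : List σ := l.map Prod.fst

/-- Internal states of a computation: all visited states except the first and the last. -/
def internalStates {σ Q : Type} (l : Steps σ Q) : List Q := (l.map Prod.snd).dropLast

/-- The transitions used by a computation. -/
def compTrans {σ Q : Type} : Q → Steps σ Q → List (Q × σ × Q)
  | _, [] => []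
  | q, (a, q') :: l => (q, a, q') :: compTrans q' l

/-- Acceptance of a word. -/
def Auto.AcceptsS {σ Q : Type} (A : Auto σ Q) (w : List σ) : Prop :=
  ∃ i ∈ A.I, ∃ (l : Steps σ Q) (t : Q), A.IsCompS i l t ∧ stepLabel l = w ∧ t ∈ A.F

/-- `B` is a topological (out-)coding of `A`. -/
structure TopCoding {σA QA σB QB : Type} (A : Auto σA QA) (B : Auto σB QB) where
  ui : List σB
  uf : List σB
  lam : σA → List σB
  lam_ne : ∀ a, lam a ≠ []
  lam_inj : Function.Injective lam
  nu : QA → QB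
  nu_inj : Function.Injective nu
  etaI : QA → QB × Steps σB QB
  eta : QA × σA × QA → QB × Steps σB QB
  etaF : QA → QB × Steps σB QB
  -- (d) η_i is a bijection from the initial states of A onto W_B^initial
  etaI_init : ∀ s ∈ A.I, (etaI s).1 ∈ B.I
  etaI_lbl : ∀ s ∈ A.I, stepLabel (etaI s).2 = ui
  etaI_comp : ∀ s ∈ A.I, B.IsCompS (etaI s).1 (etaI s).2 (nu s)
  etaI_nonlast : ∀ s ∈ A.I,
      ∀ x ∈ ((etaI s).1 :: (etaI s).2.map Prod.snd).dropLast, x ∉ Set.range nu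
  etaI_inj : ∀ s ∈ A.I, ∀ s' ∈ A.I, etaI s = etaI s' → s = s'
  etaI_surj : ∀ c : QB × Steps σB QB, c.1 ∈ B.I → (∃ t, B.IsCompS c.1 c.2 t) →
      stepLabel c.2 = ui → ∃ s ∈ A.I, etaI s = c
  -- (e) η is a bijection from the transitions of A onto W_B^transition
  eta_start : ∀ e ∈ A.Δ, (eta e).1 = nu e.1
  eta_lbl : ∀ e ∈ A.Δ, stepLabel (eta e).2 = lam e.2.1
  eta_comp : ∀ e ∈ A.Δ, B.IsCompS (eta e).1 (eta e).2 (nu e.2.2)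
  eta_internal : ∀ e ∈ A.Δ, ∀ x ∈ internalStates (eta e).2, x ∉ Set.range nu
  eta_inj : ∀ e ∈ A.Δ, ∀ e' ∈ A.Δ, eta e = eta e' → e = e'
  eta_surj : ∀ c : QB × Steps σB QB, c.1 ∈ Set.range nu → (∃ t, B.IsCompS c.1 c.2 t) →
      stepLabel c.2 ∈ Set.range lam → ∃ e ∈ A.Δ, eta e = c
  -- (f) η_f is a bijection from the final states of A onto W_B^final
  etaF_start : ∀ s ∈ A.F, (etaF s).1 = nu s
  etaF_lbl : ∀ s ∈ A.F, stepLabel (etaF s).2 = uf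
  etaF_comp : ∀ s ∈ A.F, B.IsCompS (etaF s).1 (etaF s).2 (compTgt (etaF s).1 (etaF s).2)
  etaF_final : ∀ s ∈ A.F, compTgt (etaF s).1 (etaF s).2 ∈ B.F
  etaF_nonfirst : ∀ s ∈ A.F, ∀ x ∈ (etaF s).2.map Prod.snd, x ∉ Set.range nu
  etaF_inj : ∀ s ∈ A.F, ∀ s' ∈ A.F, etaF s = etaF s' → s = s'
  etaF_surj : ∀ c : QB × Steps σB QB, c.1 ∈ Set.range nu → (∃ t, B.IsCompS c.1 c.2 t) →
      stepLabel c.2 = uf → ∃ s ∈ A.F, etaF s = c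
  -- (g) distinct selected computations share no transition nor internal state
  disjoint : ∀ c1 ∈ (etaI '' A.I ∪ eta '' A.Δ ∪ etaF '' A.F),
      ∀ c2 ∈ (etaI '' A.I ∪ eta '' A.Δ ∪ etaF '' A.F),
      ((∃ τ, τ ∈ compTrans c1.1 c1.2 ∧ τ ∈ compTrans c2.1 c2.2) ∨
       (∃ x, x ∈ internalStates c1.2 ∧ x ∈ internalStates c2.2)) → c1 = c2

lemma comp_append {σ Q : Type} {A : Auto σ Q} {q m t : Q} {l1 l2 : Steps σ Q}
    (h1 : A.IsCompS q l1 m) (h2 : A.IsCompS m l2 t) : A.IsCompS q (l1 ++ l2) t := by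
  induction h1 with
  | nil => simpa using h2
  | cons hd _ ih => exact Auto.IsCompS.cons hd (ih h2)

lemma comp_tgt_unique {σ Q : Type} {A : Auto σ Q} {q t t' : Q} {l : Steps σ Q}
    (h : A.IsCompS q l t) (h' : A.IsCompS q l t') : t = t' := by
  induction h with
  | nil => cases h'; rfl
  | cons hd _ ih => cases h' with | cons _ h2 => exact ih h2

lemma comp_split {σ Q : Type} {A : Auto σ Q} {q t : Q} (l1 : Steps σ Q) {l2 : Steps σ Q}
    (h : A.IsCompS q (l1 ++ l2) t) : ∃ m, A.IsCompS q l1 m ∧ A.IsCompS m l2 t := by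
  induction l1 generalizing q with
  | nil => exact ⟨q, Auto.IsCompS.nil q, h⟩
  | cons p l1 ih =>
    obtain ⟨a, q'⟩ := p
    cases h with
    | cons hd h2 =>
      obtain ⟨m, hm1, hm2⟩ := ih h2
      exact ⟨m, Auto.IsCompS.cons hd hm1, hm2⟩

lemma stepLabel_append {σ Q : Type} (l1 l2 : Steps σ Q) :
    stepLabel (l1 ++ l2) = stepLabel l1 ++ stepLabel l2 := List.map_append

lemma split_label {σ Q : Type} {A : Auto σ Q} {q t : Q} {l : Steps σ Q}
    (comp : A.IsCompS q l t) {w1 w2 : List σ} (hl : stepLabel l = w1 ++ w2) :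
    ∃ l1 l2 m, stepLabel l1 = w1 ∧ stepLabel l2 = w2 ∧
      A.IsCompS q l1 m ∧ A.IsCompS m l2 t := by
  have hlen : l.length = w1.length + w2.length := by
    have := congrArg List.length hl
    simpa [stepLabel] using this
  have hsplit : l = l.take w1.length ++ l.drop w1.length := (List.take_append_drop _ _).symm
  rw [hsplit] at comp
  obtain ⟨m, h1, h2⟩ := comp_split _ comp
  refine ⟨_, _, m, ?_, ?_, h1, h2⟩
  · have : stepLabel (l.take w1.length) = (stepLabel l).take w1.length := by
      simp [stepLabel, List.map_take]
    rw [this, hl, List.take_left]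
  · have : stepLabel (l.drop w1.length) = (stepLabel l).drop w1.length := by
      simp [stepLabel, List.map_drop]
    rw [this, hl, List.drop_left]

/-- Forward: lift an A-computation to a B-computation between the ν-images. -/
lemma lift_comp {σA QA σB QB : Type} {A : Auto σA QA} {B : Auto σB QB}
    (T : TopCoding A B) {s t : QA} {lA : Steps σA QA} (h : A.IsCompS s lA t) :
    ∃ lB : Steps σB QB, B.IsCompS (T.nu s) lB (T.nu t) ∧
      stepLabel lB = ((stepLabel lA).map T.lam).flatten := by
  induction h with
  | nil q => exact ⟨[], Auto.IsCompS.nil _, by simp [stepLabel]⟩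
  | @cons q q' tt a l hd _ ih =>
    obtain ⟨lB, hcomp, hlbl⟩ := ih
    have hstart := T.eta_start _ hd
    have hcomp1 := T.eta_comp _ hd
    rw [hstart] at hcomp1
    refine ⟨(T.eta (q, a, q')).2 ++ lB, comp_append hcomp1 hcomp, ?_⟩
    rw [stepLabel_append, hlbl, T.eta_lbl _ hd]
    simp [stepLabel]

/-- Backward: decode the middle part of a B-computation. -/
lemma decode_mid {σA QA σB QB : Type} {A : Auto σA QA} {B : Auto σB QB}
    (T : TopCoding A B) :
    ∀ (u : List σA) (s : QA) (l : Steps σB QB) (t : QB),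
      B.IsCompS (T.nu s) l t → stepLabel l = ((u.map T.lam)).flatten →
      ∃ (s' : QA) (lA : Steps σA QA),
        A.IsCompS s lA s' ∧ stepLabel lA = u ∧ T.nu s' = t := by
  intro u
  induction u with
  | nil =>
    intro s l t hcomp hlbl
    simp at hlbl
    have : l = [] := by simpa [stepLabel] using hlbl
    subst this
    cases hcomp
    exact ⟨s, [], Auto.IsCompS.nil s, rfl, rfl⟩
  | cons a u ih =>
    intro s l t hcomp hlbl
    have hlbl' : stepLabel l = T.lam a ++ (u.map T.lam).flatten := by
      simpa using hlbl
    obtain ⟨l1, l2, m, hl1, hl2, hc1, hc2⟩ := split_label hcomp hlbl'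
    obtain ⟨e, he, heq⟩ := T.eta_surj (T.nu s, l1) ⟨s, rfl⟩ ⟨m, hc1⟩ (by exact ⟨a, hl1.symm⟩)
    have hstart : T.nu e.1 = T.nu s := by rw [← T.eta_start e he, heq]
    have he1 : e.1 = s := T.nu_inj hstart
    have hlbl1 : T.lam e.2.1 = T.lam a := by rw [← T.eta_lbl e he, heq, hl1]
    have he2 : e.2.1 = a := T.lam_inj hlbl1
    have hcomp1 : B.IsCompS (T.nu s) l1 (T.nu e.2.2) := by
      have := T.eta_comp e he
      rwa [heq] at this
    have hm : T.nu e.2.2 = m := comp_tgt_unique hcomp1 hc1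
    rw [← hm] at hc2
    obtain ⟨s', lA, hA, hAlbl, hnu⟩ := ih e.2.2 l2 t hc2 hl2
    refine ⟨s', (a, e.2.2) :: lA, Auto.IsCompS.cons ?_ hA, by simpa [stepLabel] using hAlbl, hnu⟩
    have : (s, a, e.2.2) = e := by
      obtain ⟨e1, e2, e3⟩ := e
      simp_all
    rwa [this]

/-- `u` is accepted by `A` iff `u_i · λ(u) · u_f` is accepted by `B`. -/
theorem stmt_7 {σA QA σB QB : Type} {A : Auto σA QA} {B : Auto σB QB}
    (T : TopCoding A B) :
    ∀ u : List σA,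
      A.AcceptsS u ↔ B.AcceptsS (T.ui ++ (u.map T.lam).flatten ++ T.uf) := by
  intro u
  constructor
  · rintro ⟨i, hi, lA, t, hcomp, hlbl, ht⟩
    obtain ⟨lB, hB, hBlbl⟩ := lift_comp T hcomp
    have hIcomp := T.etaI_comp i hi
    have hFcomp := T.etaF_comp t ht
    rw [T.etaF_start t ht] at hFcomp
    refine ⟨(T.etaI i).1, T.etaI_init i hi,
      (T.etaI i).2 ++ lB ++ (T.etaF t).2,
      compTgt (T.nu t) (T.etaF t).2, ?_, ?_, ?_⟩
    · exact comp_append (comp_append hIcomp hB) hFcomp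
    · rw [stepLabel_append, stepLabel_append, T.etaI_lbl i hi, hBlbl, hlbl,
        T.etaF_lbl t ht]
    · have := T.etaF_final t ht
      rwa [T.etaF_start t ht] at this
  · rintro ⟨i, hi, lB, t, hcomp, hlbl, ht⟩
    have hlbl' : stepLabel lB = T.ui ++ ((u.map T.lam).flatten ++ T.uf) := by
      rw [hlbl]; simp
    obtain ⟨l1, lr, m1, hl1, hlr, hc1, hcr⟩ := split_label hcomp hlbl'
    obtain ⟨s, hs, hseq⟩ := T.etaI_surj (i, l1) hi ⟨m1, hc1⟩ hl1
    have hIcomp : B.IsCompS i l1 (T.nu s) := by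
      have := T.etaI_comp s hs; rwa [hseq] at this
    have hm1 : T.nu s = m1 := comp_tgt_unique hIcomp hc1
    rw [← hm1] at hcr
    obtain ⟨l2, l3, m2, hl2, hl3, hc2, hc3⟩ := split_label hcr hlr
    obtain ⟨s', lA, hA, hAlbl, hnu⟩ := decode_mid T u s l2 m2 hc2 hl2
    obtain ⟨sf, hsf, hsfeq⟩ := T.etaF_surj (m2, l3) ⟨s', hnu⟩ ⟨t, hc3⟩ hl3
    have : T.nu sf = m2 := by rw [← T.etaF_start sf hsf, hsfeq]
    have hsf' : sf = s' := T.nu_inj (by rw [this, ← hnu])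
    exact ⟨s, hs, lA, s', hA, hAlbl, hsf' ▸ hsf⟩
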